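/- Let E be a real normed vector space, J ⊆ ℝ an interval, σ : J → E a twice continuously differentiable curve and g : J → ℝ a continuous function such that σ''(s) = g(s)·σ'(s) for all s ∈ J. Fix s₀ ∈ J and assume σ'(s₀) ≠ 0. Then the image of σ is contained in a straight line: for every s ∈ J there exists r ∈ ℝ with σ(s) = σ(s₀) + r·σ'(s₀). In other words, a regular curve whose acceleration is everywhere proportional to its velocity has zero curvature and parametrizes a segment of an affine line. -/

import Mathlib

/-- **Claim 5.3 of the paper.** Let `E` be a real normed vector space,
`J ⊆ ℝ` an interval, `σ : J → E` a twice continuously differentiable curve and `g : J → ℝ`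
a continuous function with `σ''(s) = g(s)·σ'(s)` on `J`. If `s₀ ∈ J` and `σ'(s₀) ≠ 0`, then
the image of `σ` is contained in the straight line through `σ(s₀)` with direction `σ'(s₀)`:
a regular curve whose acceleration is everywhere proportional to its velocity has zero
curvature and parametrizes a segment of an affine line. -/
theorem stmt14 (E : Type*) [NormedAddCommGroup E] [NormedSpace ℝ E]
    (J : Set ℝ) (hJ : Convex ℝ J)
    (σ : ℝ → E) (g : ℝ → ℝ)
    (hσ : ContDiffOn ℝ 2 σ J) (hg : ContinuousOn g J)
    (hode : ∀ s ∈ J, derivWithin (derivWithin σ J) J s = g s • derivWithin σ J s)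
    (s₀ : ℝ) (hs₀ : s₀ ∈ J) (hreg : derivWithin σ J s₀ ≠ 0) :
    ∀ s ∈ J, ∃ r : ℝ, σ s = σ s₀ + r • derivWithin σ J s₀ := by
  intro s hs
  rcases eq_or_ne s s₀ with h | h
  · exact ⟨0, by simp [h]⟩
  set a : ℝ := min s₀ s with ha
  set b : ℝ := max s₀ s with hb
  have hab : a < b := by
    rcases lt_or_gt_of_ne h with h' | h'
    · simpa [ha, hb, min_def, max_def, le_of_lt h'] using h'
    · simpa [ha, hb, min_def, max_def, le_of_lt h'] using h'
  set K : Set ℝ := Set.Icc a b with hKdef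
  have hK : K ⊆ J := by
    have := hJ.ordConnected.uIcc_subset hs₀ hs
    simpa [Set.uIcc, hKdef, ha, hb] using this
  have hs₀K : s₀ ∈ K := ⟨min_le_left _ _, le_max_left _ _⟩
  have hsK : s ∈ K := ⟨min_le_right _ _, le_max_right _ _⟩
  -- unique differentiability of J
  have hu : UniqueDiffOn ℝ J := by
    refine uniqueDiffOn_convex hJ ⟨(a + b) / 2, ?_⟩
    have : Set.Ioo a b ⊆ interior J :=
      interior_maximal (fun x hx => hK ⟨le_of_lt hx.1, le_of_lt hx.2⟩) isOpen_Ioo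
    exact this ⟨by linarith, by linarith⟩
  set v : ℝ → E := derivWithin σ J with hv
  have hσd : DifferentiableOn ℝ σ J := hσ.differentiableOn (by norm_num)
  have hvd : DifferentiableOn ℝ v J :=
    (hσ.derivWithin hu (m := 1) (by norm_num)).differentiableOn (by norm_num)
  have hσK : ∀ x ∈ K, HasDerivWithinAt σ (v x) K x := fun x hx =>
    ((hσd x (hK hx)).hasDerivWithinAt).mono hK
  have hvK : ∀ x ∈ K, HasDerivWithinAt v (g x • v x) K x := by
    intro x hx
    have h1 := (hvd x (hK hx)).hasDerivWithinAt
    rw [hode x (hK hx)] at h1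
    exact h1.mono hK
  -- continuous extension of g
  set gt : ℝ → ℝ := Set.IccExtend hab.le (K.restrict g) with hgtdef
  have hgt : Continuous gt :=
    Continuous.Icc_extend' (continuousOn_iff_continuous_restrict.mp (hg.mono hK))
  have hgte : ∀ x ∈ K, gt x = g x := fun x hx => by
    rw [hgtdef, Set.IccExtend_of_mem _ _ hx]; rfl
  set G : ℝ → ℝ := fun t => ∫ u in a..t, gt u with hGdef
  have hG : ∀ x : ℝ, HasDerivAt G (gt x) x := fun x =>
    (hgt.integral_hasStrictDerivAt a x).hasDerivAt
  have hGc : Continuous G :=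
    (Differentiable.continuous fun x => (hG x).differentiableAt)
  -- w = exp(-G) • v is constant on K
  set w : ℝ → E := fun x => Real.exp (-G x) • v x with hwdef
  have hw : ∀ x ∈ K, HasDerivWithinAt w 0 K x := by
    intro x hx
    have h1 : HasDerivWithinAt (fun t => Real.exp (-G t)) (Real.exp (-G x) * (-gt x)) K x :=
      (((hG x).hasDerivWithinAt).neg).exp
    have h2 := h1.smul (hvK x hx)
    convert h2 using 1
    · exact rfl
    rw [hgte x hx]
    module
  have hconst : ∀ x ∈ K, w x = w s₀ := by
    intro x hx
    have h3 := (convex_Icc a b).norm_image_sub_le_of_norm_hasDerivWithin_le hw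
      (C := 0) (fun y hy => by simp) hs₀K hx
    have h4 : ‖w x - w s₀‖ ≤ 0 := by simpa using h3
    have := le_antisymm h4 (norm_nonneg _)
    rwa [norm_eq_zero, sub_eq_zero] at this
  have hveq : ∀ x ∈ K, v x = Real.exp (G x) • w s₀ := by
    intro x hx
    rw [← hconst x hx, hwdef, smul_smul, ← Real.exp_add]
    simp
  -- second integration
  have hEc : Continuous fun t => Real.exp (G t) := Real.continuous_exp.comp hGc
  set F : ℝ → E := fun x => σ x - (∫ t in a..x, Real.exp (G t)) • w s₀ with hFdef
  have hF : ∀ x ∈ K, HasDerivWithinAt F 0 K x := by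
    intro x hx
    have h2 : HasDerivAt (fun y => ∫ t in a..y, Real.exp (G t)) (Real.exp (G x)) x :=
      (hEc.integral_hasStrictDerivAt a x).hasDerivAt
    have h3 := (hσK x hx).sub ((h2.hasDerivWithinAt.mono (Set.subset_univ K : K ⊆ Set.univ)).smul_const (w s₀))
    convert h3 using 1
    · exact rfl
    rw [hveq x hx]
    simp
  have hFconst : F s = F s₀ := by
    have h3 := (convex_Icc a b).norm_image_sub_le_of_norm_hasDerivWithin_le hF
      (C := 0) (fun y hy => by simp) hs₀K hsK
    have h4 : ‖F s - F s₀‖ ≤ 0 := by simpa using h3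
    have := le_antisymm h4 (norm_nonneg _)
    rwa [norm_eq_zero, sub_eq_zero] at this
  refine ⟨((∫ t in a..s, Real.exp (G t)) - ∫ t in a..s₀, Real.exp (G t)) * Real.exp (-G s₀), ?_⟩
  have h5 : σ s = σ s₀ + ((∫ t in a..s, Real.exp (G t)) - ∫ t in a..s₀, Real.exp (G t)) • w s₀ := by
    have := hFconst
    rw [hFdef] at this
    simp only at this
    rw [sub_smul]
    abel_nf
    linear_combination (norm := abel) this
  rw [h5, hwdef]
  rw [smul_smul]
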